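/- arXiv:2511.04945 — 6 statements merged into one kernel-verified Lean document; each statement's English description precedes it below -/
import Mathlib

section
/- For any real r with 0 < r ≤ 1, the function f(x) = arcsin(√r · sin x) is concave on the interval [0, π/2]. -/
open Real Set

theorem arcsin_sqrt_mul_sin_concaveOn (r : ℝ) (hr0 : 0 < r) (hr1 : r ≤ 1) :
    ConcaveOn ℝ (Set.Icc 0 (π / 2))
      (fun x : ℝ => Real.arcsin (Real.sqrt r * Real.sin x)) := by
  set f := fun x : ℝ => Real.arcsin (Real.sqrt r * Real.sin x) with hf
  set g := fun x : ℝ => Real.sqrt r * Real.cos x / Real.sqrt (1 - r * Real.sin x ^ 2) with hg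
  -- facts on interior
  have hint : interior (Set.Icc (0:ℝ) (π/2)) = Set.Ioo 0 (π/2) := interior_Icc
  have hmem : ∀ x ∈ Set.Ioo (0:ℝ) (π/2),
      0 < Real.sin x ∧ 0 < Real.cos x ∧ Real.sin x ^ 2 < 1 ∧ r * Real.sin x ^ 2 < 1 := by
    intro x hx
    have hs : 0 < Real.sin x := Real.sin_pos_of_pos_of_lt_pi hx.1 (by
      have := pi_pos; linarith [hx.2])
    have hc : 0 < Real.cos x := Real.cos_pos_of_mem_Ioo ⟨by linarith [hx.1, pi_pos], hx.2⟩
    have h1 : Real.sin x ^ 2 < 1 := by nlinarith [Real.sin_sq_add_cos_sq x]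
    refine ⟨hs, hc, h1, ?_⟩
    nlinarith [sq_nonneg (Real.sin x)]
  have hderiv : ∀ x ∈ Set.Ioo (0:ℝ) (π/2), HasDerivAt f (g x) x := by
    intro x hx
    obtain ⟨hs, hc, h1, hr1'⟩ := hmem x hx
    have hu2 : (Real.sqrt r * Real.sin x) ^ 2 = r * Real.sin x ^ 2 := by
      rw [mul_pow, Real.sq_sqrt hr0.le]
    have hune : Real.sqrt r * Real.sin x ≠ 1 ∧ Real.sqrt r * Real.sin x ≠ -1 := by
      constructor <;> intro h <;> rw [h] at hu2 <;> nlinarith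
    have h1 : HasDerivAt (fun x : ℝ => Real.sqrt r * Real.sin x) (Real.sqrt r * Real.cos x) x :=
      (Real.hasDerivAt_sin x).const_mul _
    have h2 := (Real.hasDerivAt_arcsin hune.2 hune.1).comp x h1
    have : 1 / Real.sqrt (1 - (Real.sqrt r * Real.sin x) ^ 2) * (Real.sqrt r * Real.cos x)
        = g x := by
      rw [hu2]; simp [hg]; ring
    rwa [this] at h2
  have hcont : ContinuousOn f (Set.Icc 0 (π/2)) :=
    (Real.continuous_arcsin.comp (continuous_const.mul Real.continuous_sin)).continuousOn
  have hdiff : DifferentiableOn ℝ f (interior (Set.Icc 0 (π/2))) := by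
    rw [hint]; intro x hx; exact (hderiv x hx).differentiableAt.differentiableWithinAt
  apply AntitoneOn.concaveOn_of_deriv (convex_Icc _ _) hcont hdiff
  rw [hint]
  have hderiv' : ∀ x ∈ Set.Ioo (0:ℝ) (π/2), deriv f x = g x := fun x hx =>
    (hderiv x hx).deriv
  intro x hx y hy hxy
  rw [hderiv' x hx, hderiv' y hy]
  obtain ⟨hsx, hcx, h1x, hrx⟩ := hmem x hx
  obtain ⟨hsy, hcy, h1y, hry⟩ := hmem y hy
  have hsxy : Real.sin x ≤ Real.sin y := by
    apply Real.sin_le_sin_of_le_of_le_pi_div_two (by linarith [hx.1, pi_pos]) hy.2.le hxy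
  have hdx : (0:ℝ) < 1 - r * Real.sin x ^ 2 := by linarith
  have hdy : (0:ℝ) < 1 - r * Real.sin y ^ 2 := by linarith
  have hgx : 0 ≤ g x := by
    apply div_nonneg (by positivity) (Real.sqrt_nonneg _)
  have hgy : 0 ≤ g y := by
    apply div_nonneg (by positivity) (Real.sqrt_nonneg _)
  have hsq : g y ^ 2 ≤ g x ^ 2 := by
    rw [hg]
    rw [div_pow, div_pow, mul_pow, mul_pow, Real.sq_sqrt hr0.le,
      Real.sq_sqrt hdx.le, Real.sq_sqrt hdy.le]
    rw [div_le_div_iff₀ hdy hdx]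
    have hcx2 : Real.cos x ^ 2 = 1 - Real.sin x ^ 2 := by
      nlinarith [Real.sin_sq_add_cos_sq x]
    have hcy2 : Real.cos y ^ 2 = 1 - Real.sin y ^ 2 := by
      nlinarith [Real.sin_sq_add_cos_sq y]
    rw [hcx2, hcy2]
    nlinarith [mul_le_mul_of_nonneg_left (mul_le_mul hsxy hsxy hsx.le hsy.le) hr0.le]
  nlinarith
end

section
/- Let K ≥ 1 be an odd integer and let r be a real number with sin²(π/2 · (1 - 1/K)) < r ≤ 1. Then for every θ with 0 ≤ θ < π/2, we have 0 ≤ (2Kθ)/π - (2K · arcsin(√r · sin θ))/π < 1. -/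
open Real

theorem scaled_angle_diff_bound (K : ℤ) (hK1 : 1 ≤ K) (hKodd : Odd K) (r : ℝ)
    (hr_lb : Real.sin (π / 2 * (1 - 1 / (K : ℝ))) ^ 2 < r) (hr1 : r ≤ 1)
    (θ : ℝ) (hθ0 : 0 ≤ θ) (hθ : θ < π / 2) :
    0 ≤ 2 * (K : ℝ) * θ / π - 2 * (K : ℝ) * Real.arcsin (Real.sqrt r * Real.sin θ) / π ∧
      2 * (K : ℝ) * θ / π - 2 * (K : ℝ) * Real.arcsin (Real.sqrt r * Real.sin θ) / π < 1 := by
  have hπ := Real.pi_pos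
  have hKr : (1:ℝ) ≤ (K:ℝ) := by exact_mod_cast hK1
  have hKpos : (0:ℝ) < (K:ℝ) := by linarith
  set c := π / (2 * (K:ℝ)) with hc
  have hc0 : 0 < c := by positivity
  have hcle : c ≤ π/2 := by
    rw [hc, div_le_div_iff₀ (by positivity) (by norm_num)]
    nlinarith
  have hrw : π / 2 * (1 - 1 / (K:ℝ)) = π/2 - c := by
    rw [hc]; field_simp
  have hcosc : Real.cos c < Real.sqrt r := by
    rw [hrw, Real.sin_pi_div_two_sub] at hr_lb
    have hc2 : 0 ≤ Real.cos c := Real.cos_nonneg_of_mem_Icc ⟨by linarith, hcle⟩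
    exact (Real.lt_sqrt hc2).mpr hr_lb
  have hsθ0 : 0 ≤ Real.sin θ := Real.sin_nonneg_of_nonneg_of_le_pi hθ0 (by linarith)
  have hsθ1 : Real.sin θ ≤ 1 := Real.sin_le_one θ
  have hsr1 : Real.sqrt r ≤ 1 := Real.sqrt_le_one.mpr hr1
  have hsr0 : 0 ≤ Real.sqrt r := Real.sqrt_nonneg r
  have hx1 : Real.sqrt r * Real.sin θ ≤ Real.sin θ := by nlinarith
  have hx0 : 0 ≤ Real.sqrt r * Real.sin θ := by positivity
  have hxle1 : Real.sqrt r * Real.sin θ ≤ 1 := by nlinarith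
  have harcsin_le : Real.arcsin (Real.sqrt r * Real.sin θ) ≤ θ := by
    calc Real.arcsin (Real.sqrt r * Real.sin θ) ≤ Real.arcsin (Real.sin θ) :=
          Real.monotone_arcsin hx1
      _ = θ := Real.arcsin_sin (by linarith) (by linarith)
  have key : θ - Real.arcsin (Real.sqrt r * Real.sin θ) < c := by
    rcases lt_or_ge θ c with h | h
    · have h0 : 0 ≤ Real.arcsin (Real.sqrt r * Real.sin θ) := Real.arcsin_nonneg.mpr hx0
      linarith
    · have hsθpos : 0 < Real.sin θ :=
        Real.sin_pos_of_pos_of_lt_pi (lt_of_lt_of_le hc0 h) (by linarith)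
      have hsinc : 0 < Real.sin c := Real.sin_pos_of_pos_of_lt_pi hc0 (by linarith)
      have hcosθ : 0 < Real.cos θ := Real.cos_pos_of_mem_Ioo ⟨by linarith, hθ⟩
      have hlt : Real.sin (θ - c) < Real.sqrt r * Real.sin θ := by
        rw [Real.sin_sub]
        nlinarith
      have heq : Real.arcsin (Real.sin (θ - c)) = θ - c :=
        Real.arcsin_sin (by linarith) (by linarith)
      have hmem1 : Real.sin (θ - c) ∈ Set.Icc (-1:ℝ) 1 :=
        ⟨Real.neg_one_le_sin _, Real.sin_le_one _⟩
      have hmem2 : Real.sqrt r * Real.sin θ ∈ Set.Icc (-1:ℝ) 1 := ⟨by linarith, hxle1⟩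
      have := Real.strictMonoOn_arcsin hmem1 hmem2 hlt
      rw [heq] at this
      linarith
  constructor
  · have heq : 2 * (K:ℝ) * θ / π - 2 * (K:ℝ) * Real.arcsin (Real.sqrt r * Real.sin θ) / π
        = 2 * (K:ℝ) * (θ - Real.arcsin (Real.sqrt r * Real.sin θ)) / π := by ring
    rw [heq]
    apply div_nonneg _ hπ.le
    nlinarith
  · have heq : 2 * (K:ℝ) * θ / π - 2 * (K:ℝ) * Real.arcsin (Real.sqrt r * Real.sin θ) / π
        = 2 * (K:ℝ) * (θ - Real.arcsin (Real.sqrt r * Real.sin θ)) / π := by ring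
    rw [heq, div_lt_one hπ]
    have : 2 * (K:ℝ) * (θ - Real.arcsin (Real.sqrt r * Real.sin θ)) < 2 * (K:ℝ) * c := by
      apply mul_lt_mul_of_pos_left key (by positivity)
    rw [hc] at this
    calc 2 * (K:ℝ) * (θ - Real.arcsin (Real.sqrt r * Real.sin θ))
        < 2 * (K:ℝ) * (π / (2 * (K:ℝ))) := this
      _ = π := by field_simp
end

section
/- For any r with 0 < r ≤ 1, the function g(x) = x - arcsin(√r · sin x) is convex on [0, π/2], and hence attains its maximum on [0, π/2] at one of the endpoints 0 or π/2. -/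
open Real

private lemma aux_sin_lt_one {x : ℝ} (hx : x ∈ Set.Ioo 0 (π / 2)) : Real.sin x < 1 := by
  have := Real.strictMonoOn_sin (a := x) (b := π / 2)
    ⟨by linarith [hx.1, Real.pi_pos], hx.2.le⟩
    ⟨by linarith [Real.pi_pos], le_refl _⟩ hx.2
  rwa [Real.sin_pi_div_two] at this

private lemma aux_hasDerivAt (r : ℝ) (hr0 : 0 < r) (hr1 : r ≤ 1) {x : ℝ}
    (hx : x ∈ Set.Ioo 0 (π / 2)) :
    HasDerivAt (fun x : ℝ => x - Real.arcsin (Real.sqrt r * Real.sin x))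
      (1 - Real.sqrt r * Real.cos x / Real.sqrt (1 - r * Real.sin x ^ 2)) x := by
  have hs0 : 0 < Real.sin x := Real.sin_pos_of_pos_of_lt_pi hx.1 (by linarith [hx.2, Real.pi_pos])
  have hs1 : Real.sin x < 1 := aux_sin_lt_one hx
  have hsr : Real.sqrt r ≤ 1 := by
    rw [show (1:ℝ) = Real.sqrt 1 by simp]
    exact Real.sqrt_le_sqrt hr1
  have hsr0 : 0 < Real.sqrt r := Real.sqrt_pos.2 hr0
  have hu1 : Real.sqrt r * Real.sin x < 1 := by nlinarith
  have hu0 : 0 < Real.sqrt r * Real.sin x := by positivity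
  have h1 : HasDerivAt (fun x : ℝ => Real.sqrt r * Real.sin x)
      (Real.sqrt r * Real.cos x) x := (Real.hasDerivAt_sin x).const_mul _
  have h2 := (Real.hasDerivAt_arcsin (x := Real.sqrt r * Real.sin x)
      (by linarith) (by linarith)).comp x h1
  have h3 : HasDerivAt (fun x : ℝ => x - Real.arcsin (Real.sqrt r * Real.sin x))
      (1 - 1 / Real.sqrt (1 - (Real.sqrt r * Real.sin x) ^ 2) *
        (Real.sqrt r * Real.cos x)) x := (hasDerivAt_id x).sub h2
  convert h3 using 2
  rw [mul_pow, Real.sq_sqrt hr0.le]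
  ring

theorem sub_arcsin_sqrt_mul_sin_convexOn_and_max_at_endpoints (r : ℝ) (hr0 : 0 < r) (hr1 : r ≤ 1) :
    ConvexOn ℝ (Set.Icc 0 (π / 2))
      (fun x : ℝ => x - Real.arcsin (Real.sqrt r * Real.sin x)) ∧
    ∀ x ∈ Set.Icc 0 (π / 2),
      x - Real.arcsin (Real.sqrt r * Real.sin x) ≤
        max (0 - Real.arcsin (Real.sqrt r * Real.sin 0))
          (π / 2 - Real.arcsin (Real.sqrt r * Real.sin (π / 2))) := by
  have hint : interior (Set.Icc (0:ℝ) (π / 2)) = Set.Ioo 0 (π / 2) := interior_Icc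
  have hderiv : ∀ x ∈ Set.Ioo (0:ℝ) (π / 2),
      deriv (fun x : ℝ => x - Real.arcsin (Real.sqrt r * Real.sin x)) x
        = 1 - Real.sqrt r * Real.cos x / Real.sqrt (1 - r * Real.sin x ^ 2) := fun x hx =>
    (aux_hasDerivAt r hr0 hr1 hx).deriv
  have hconv : ConvexOn ℝ (Set.Icc 0 (π / 2))
      (fun x : ℝ => x - Real.arcsin (Real.sqrt r * Real.sin x)) := by
    apply MonotoneOn.convexOn_of_deriv (convex_Icc _ _)
    · exact (continuous_id.sub ((Real.continuous_arcsin).comp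
        (continuous_const.mul Real.continuous_sin))).continuousOn
    · rw [hint]
      intro x hx
      exact (aux_hasDerivAt r hr0 hr1 hx).differentiableAt.differentiableWithinAt
    · rw [hint]
      intro x hx y hy hxy
      rw [hderiv x hx, hderiv y hy]
      have hsin : Real.sin x ≤ Real.sin y := by
        apply Real.strictMonoOn_sin.monotoneOn ?_ ?_ hxy
        · exact ⟨by linarith [hx.1, Real.pi_pos], hx.2.le⟩
        · exact ⟨by linarith [hy.1, Real.pi_pos], hy.2.le⟩
      have hsx0 : 0 ≤ Real.sin x := (Real.sin_pos_of_pos_of_lt_pi hx.1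
        (by linarith [hx.2, Real.pi_pos])).le
      have hsx1 : Real.sin x < 1 := aux_sin_lt_one hx
      have hsy1 : Real.sin y < 1 := aux_sin_lt_one hy
      have hcx0 : 0 ≤ Real.cos x := Real.cos_nonneg_of_mem_Icc
        ⟨by linarith [hx.1, Real.pi_pos], hx.2.le⟩
      have hcy0 : 0 ≤ Real.cos y := Real.cos_nonneg_of_mem_Icc
        ⟨by linarith [hy.1, Real.pi_pos], hy.2.le⟩
      have hAx : 0 < 1 - r * Real.sin x ^ 2 := by nlinarith
      have hAy : 0 < 1 - r * Real.sin y ^ 2 := by nlinarith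
      have key : Real.sqrt r * Real.cos y / Real.sqrt (1 - r * Real.sin y ^ 2)
          ≤ Real.sqrt r * Real.cos x / Real.sqrt (1 - r * Real.sin x ^ 2) := by
        rw [div_le_div_iff₀ (Real.sqrt_pos.2 hAy) (Real.sqrt_pos.2 hAx)]
        have hsr0 : 0 ≤ Real.sqrt r := Real.sqrt_nonneg r
        have h1 : Real.cos y * Real.sqrt (1 - r * Real.sin x ^ 2)
            ≤ Real.cos x * Real.sqrt (1 - r * Real.sin y ^ 2) := by
          rw [← Real.sqrt_sq hcy0, ← Real.sqrt_mul (sq_nonneg _),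
            ← Real.sqrt_sq hcx0, ← Real.sqrt_mul (sq_nonneg _)]
          apply Real.sqrt_le_sqrt
          have px := Real.sin_sq_add_cos_sq x
          have py := Real.sin_sq_add_cos_sq y
          nlinarith [mul_nonneg (sub_nonneg.2 hr1)
            (mul_nonneg (sub_nonneg.2 hsin) (by linarith : (0:ℝ) ≤ Real.sin y + Real.sin x))]
        calc Real.sqrt r * Real.cos y * Real.sqrt (1 - r * Real.sin x ^ 2)
            = Real.sqrt r * (Real.cos y * Real.sqrt (1 - r * Real.sin x ^ 2)) := by ring
          _ ≤ Real.sqrt r * (Real.cos x * Real.sqrt (1 - r * Real.sin y ^ 2)) :=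
              mul_le_mul_of_nonneg_left h1 hsr0
          _ = Real.sqrt r * Real.cos x * Real.sqrt (1 - r * Real.sin y ^ 2) := by ring
      linarith
  refine ⟨hconv, fun x hx => ?_⟩
  have h0 : (0:ℝ) ∈ Set.Icc (0:ℝ) (π / 2) := Set.left_mem_Icc.2 (by positivity)
  have h1 : (π / 2) ∈ Set.Icc (0:ℝ) (π / 2) := Set.right_mem_Icc.2 (by positivity)
  have hseg : x ∈ segment ℝ (0:ℝ) (π / 2) := by
    rw [segment_eq_Icc (by positivity : (0:ℝ) ≤ π / 2)]; exact hx
  exact hconv.le_on_segment h0 h1 hseg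
end

section
/- Suppose the true angle θ_a ∈ [θ_l, θ_u] ⊆ [0, π/2] and K is a positive odd integer with ⌊2Kθ_l/π⌋ = ⌈2Kθ_u/π⌉ - 1 and the quadrant count R = ⌊2Kθ_l/π⌋ even. If a_min ≤ sin²(Kθ_a) ≤ a_max with 0 ≤ a_min ≤ a_max ≤ 1, then θ_a lies in the interval [(R·π/2 + arcsin√a_min)/K, (R·π/2 + arcsin√a_max)/K] ∩ [θ_l, θ_u]. -/
open Real

theorem even_quadrant_confidence_interval (θa θl θu : ℝ) (K : ℤ) (hK1 : 1 ≤ K) (hKodd : Odd K)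
    (h0 : 0 ≤ θl) (hal : θl ≤ θa) (hau : θa ≤ θu) (hu : θu ≤ π / 2)
    (hcond : ⌊2 * (K : ℝ) * θl / π⌋ = ⌈2 * (K : ℝ) * θu / π⌉ - 1)
    (R : ℤ) (hR : R = ⌊2 * (K : ℝ) * θl / π⌋) (hReven : Even R)
    (amin amax : ℝ) (h0a : 0 ≤ amin) (haa : amin ≤ amax) (ha1 : amax ≤ 1)
    (hlo : amin ≤ Real.sin ((K : ℝ) * θa) ^ 2) (hhi : Real.sin ((K : ℝ) * θa) ^ 2 ≤ amax) :
    θa ∈ Set.Icc (((R : ℝ) * π / 2 + Real.arcsin (Real.sqrt amin)) / (K : ℝ))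
        (((R : ℝ) * π / 2 + Real.arcsin (Real.sqrt amax)) / (K : ℝ)) ∩
      Set.Icc θl θu := by
  have hπ : (0:ℝ) < π := Real.pi_pos
  have hKpos : (0:ℝ) < (K:ℝ) := by exact_mod_cast hK1
  -- R π/2 ≤ K θl
  have hRl : (R:ℝ) * π / 2 ≤ (K:ℝ) * θl := by
    have h1 : (R:ℝ) ≤ 2 * (K:ℝ) * θl / π := by
      rw [hR]; exact Int.floor_le _
    have h2 := (le_div_iff₀ hπ).mp h1
    linarith
  -- K θu ≤ (R+1) π/2
  have hRu : (K:ℝ) * θu ≤ ((R:ℝ) + 1) * (π / 2) := by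
    have h1 : 2 * (K:ℝ) * θu / π ≤ ((R:ℝ) + 1) := by
      have : (2 * (K:ℝ) * θu / π) ≤ (⌈2 * (K : ℝ) * θu / π⌉ : ℝ) := Int.le_ceil _
      have hc : ((⌈2 * (K : ℝ) * θu / π⌉ : ℤ) : ℝ) = (R:ℝ) + 1 := by
        have : (⌈2 * (K : ℝ) * θu / π⌉ : ℤ) = R + 1 := by omega
        rw [this]; push_cast; ring
      linarith [hc ▸ this]
    have := mul_le_mul_of_nonneg_right h1 hπ.le
    rw [div_mul_eq_mul_div, div_le_iff₀ hπ] at *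
    nlinarith
  set γ : ℝ := (K:ℝ) * θa - (R:ℝ) * π / 2 with hγ
  clear_value γ
  have hγ0 : 0 ≤ γ := by
    have : (K:ℝ) * θl ≤ (K:ℝ) * θa := by nlinarith
    simp only [hγ]; linarith
  have hγ2 : γ ≤ π / 2 := by
    have : (K:ℝ) * θa ≤ (K:ℝ) * θu := by nlinarith
    simp only [hγ]; nlinarith
  obtain ⟨m, hm⟩ := hReven
  have hsinsq : Real.sin ((K:ℝ) * θa) ^ 2 = Real.sin γ ^ 2 := by
    have hx : (K:ℝ) * θa = γ + (m:ℝ) * π := by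
      have : (R:ℝ) = 2 * (m:ℝ) := by exact_mod_cast hm ▸ (by push_cast; ring : ((m+m : ℤ):ℝ) = 2*(m:ℝ))
      rw [hγ, this]; ring
    have hc : Real.cos ((m:ℝ) * π) ^ 2 = 1 := by
      have h := Real.abs_cos_int_mul_pi m
      nlinarith [sq_abs (Real.cos ((m:ℝ) * π))]
    rw [hx, Real.sin_add, Real.sin_int_mul_pi, mul_zero, add_zero, mul_pow, hc, mul_one]
  have hsγ : 0 ≤ Real.sin γ := Real.sin_nonneg_of_nonneg_of_le_pi hγ0 (by linarith)
  have hlo' : Real.sqrt amin ≤ Real.sin γ := by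
    have : Real.sqrt amin ≤ Real.sqrt (Real.sin γ ^ 2) :=
      Real.sqrt_le_sqrt (by rw [← hsinsq]; exact hlo)
    rwa [Real.sqrt_sq hsγ] at this
  have hhi' : Real.sin γ ≤ Real.sqrt amax := by
    have : Real.sqrt (Real.sin γ ^ 2) ≤ Real.sqrt amax :=
      Real.sqrt_le_sqrt (by rw [← hsinsq]; exact hhi)
    rwa [Real.sqrt_sq hsγ] at this
  have harcγ : Real.arcsin (Real.sin γ) = γ :=
    Real.arcsin_sin (by linarith) hγ2
  have h1 : Real.arcsin (Real.sqrt amin) ≤ γ := by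
    rw [← harcγ]; exact Real.monotone_arcsin hlo'
  have h2 : γ ≤ Real.arcsin (Real.sqrt amax) := by
    rw [← harcγ]
    exact Real.monotone_arcsin hhi'
  refine ⟨⟨?_, ?_⟩, hal, hau⟩
  · rw [div_le_iff₀ hKpos]; simp only [hγ] at h1; nlinarith
  · rw [le_div_iff₀ hKpos]; simp only [hγ] at h2; nlinarith
end

section
/- For all θ ∈ [0, π/2] and all ε_θ with 0 ≤ ε_θ ≤ min(½·arcsin(sin(π/21)·sin(8π/21)/sin(2θ)) [interpreted as π/2 when sin(2θ)=0], π/2 - θ, θ), there exists an odd integer m ∈ {3, 5, 7} such that the interval [θ - ε_θ, θ + ε_θ] is contained in a single interval of the form [(p-1)π/(2m), pπ/(2m)] for some integer p with 1 ≤ p ≤ m. -/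
open Real

private lemma cos_3pi7_gt : (2:ℝ)/9 < Real.cos (3*π/7) := by
  set c := Real.cos (3*π/7) with hc
  have h47 : Real.cos (4*(3*π/7)) = Real.cos (2*π/7) := by
    rw [show 4*(3*π/7) = -(2*π/7) + 2*π by ring, Real.cos_add_two_pi, Real.cos_neg]
  have h37 : Real.cos (3*(3*π/7)) = -Real.cos (2*π/7) := by
    rw [show 3*(3*π/7) = -(π - 2*π/7) + 2*π by ring, Real.cos_add_two_pi, Real.cos_neg,
      Real.cos_pi_sub]
  have hq : Real.cos (4*(3*π/7)) = 2*(2*c^2-1)^2 - 1 := by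
    rw [show 4*(3*π/7) = 2*(2*(3*π/7)) by ring, Real.cos_two_mul, Real.cos_two_mul]
  have h3 : Real.cos (3*(3*π/7)) = 4*c^3 - 3*c := Real.cos_three_mul _
  have hquart : 8*c^4 + 4*c^3 - 8*c^2 - 3*c + 1 = 0 := by
    have := h47; rw [hq] at this
    have h2 := h37; rw [h3] at h2
    nlinarith [this, h2]
  have hc0 : 0 ≤ c := Real.cos_nonneg_of_mem_Icc ⟨by nlinarith [pi_pos], by nlinarith [pi_pos]⟩
  have hc12 : c ≤ 1/2 := by
    have := Real.cos_le_cos_of_nonneg_of_le_pi (by positivity : (0:ℝ) ≤ π/3)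
      (by nlinarith [pi_pos] : 3*π/7 ≤ π) (by nlinarith [pi_pos] : π/3 ≤ 3*π/7)
    rw [Real.cos_pi_div_three] at this; linarith
  have hcub : 8*c^3 - 4*c^2 - 4*c + 1 = 0 := by
    have hfac : (c+1)*(8*c^3 - 4*c^2 - 4*c + 1) = 0 := by linear_combination hquart
    have : c + 1 > 0 := by linarith
    rcases mul_eq_zero.1 hfac with h | h
    · linarith
    · exact h
  by_contra h
  push_neg at h
  nlinarith [hcub, sq_nonneg (c - 2/9), sq_nonneg c]

private lemma cos_2pi7_gt : (31:ℝ)/50 < Real.cos (2*π/7) := by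
  set b := Real.cos (2*π/7) with hb
  have h4 : Real.cos (4*(2*π/7)) = Real.cos (3*(2*π/7)) := by
    rw [show 4*(2*π/7) = -(3*(2*π/7)) + 2*π by ring, Real.cos_add_two_pi, Real.cos_neg]
  have hq : Real.cos (4*(2*π/7)) = 2*(2*b^2-1)^2 - 1 := by
    rw [show 4*(2*π/7) = 2*(2*(2*π/7)) by ring, Real.cos_two_mul, Real.cos_two_mul]
  have h3 : Real.cos (3*(2*π/7)) = 4*b^3 - 3*b := Real.cos_three_mul _
  have hquart : 8*b^4 - 4*b^3 - 8*b^2 + 3*b + 1 = 0 := by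
    have := h4; rw [hq, h3] at this; nlinarith [this]
  have hb12 : 1/2 ≤ b := by
    have := Real.cos_le_cos_of_nonneg_of_le_pi (by positivity : (0:ℝ) ≤ 2*π/7)
      (by nlinarith [pi_pos] : π/3 ≤ π) (by nlinarith [pi_pos] : 2*π/7 ≤ π/3)
    rw [Real.cos_pi_div_three] at this; linarith
  have hb1 : b < 1 := by
    have h1 : b ≤ Real.cos (π/4) := Real.cos_le_cos_of_nonneg_of_le_pi (by positivity)
      (by nlinarith [pi_pos]) (by nlinarith [pi_pos])
    rw [Real.cos_pi_div_four] at h1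
    nlinarith [Real.sq_sqrt (by norm_num : (0:ℝ) ≤ 2), Real.sqrt_nonneg 2]
  have hcub : 8*b^3 + 4*b^2 - 4*b - 1 = 0 := by
    have hfac : (b-1)*(8*b^3 + 4*b^2 - 4*b - 1) = 0 := by linear_combination hquart
    rcases mul_eq_zero.1 hfac with h | h
    · linarith
    · exact h
  by_contra h
  push_neg at h
  nlinarith [hcub, sq_nonneg (b - 31/50), sq_nonneg b]

private lemma cos_2pi5 : Real.cos (2*π/5) = (Real.sqrt 5 - 1)/4 := by
  have h2 : Real.cos (2*(π/5)) = 2*(Real.cos (π/5))^2 - 1 := Real.cos_two_mul _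
  rw [show 2*π/5 = 2*(π/5) by ring, h2, Real.cos_pi_div_five]
  have h5 : (Real.sqrt 5)^2 = 5 := Real.sq_sqrt (by norm_num)
  linear_combination h5/8

private lemma NA : Real.cos (π/3) - Real.cos (3*π/7) ≤ Real.cos (π/5) - Real.cos (π/3) := by
  rw [Real.cos_pi_div_three, Real.cos_pi_div_five]
  nlinarith [cos_3pi7_gt, Real.sq_sqrt (by norm_num : (0:ℝ) ≤ 5), Real.sqrt_nonneg 5]

private lemma NB : Real.cos (π/3) - Real.cos (3*π/7) ≤ Real.cos (2*π/7) - Real.cos (2*π/5) := by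
  rw [Real.cos_pi_div_three, cos_2pi5]
  nlinarith [cos_3pi7_gt, cos_2pi7_gt, Real.sq_sqrt (by norm_num : (0:ℝ) ≤ 5),
    Real.sqrt_nonneg 5]

private lemma ND : Real.cos (π/3) - Real.cos (3*π/7) ≤ Real.cos (4*π/7) - Real.cos (2*π/3) := by
  rw [show 4*π/7 = π - 3*π/7 by ring, Real.cos_pi_sub, show 2*π/3 = π - π/3 by ring,
    Real.cos_pi_sub]
  linarith

private lemma NB' : Real.cos (π/3) - Real.cos (3*π/7) ≤ Real.cos (3*π/5) - Real.cos (5*π/7) := by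
  rw [show 3*π/5 = π - 2*π/5 by ring, Real.cos_pi_sub, show 5*π/7 = π - 2*π/7 by ring,
    Real.cos_pi_sub]
  linarith [NB]

private lemma NA' : Real.cos (π/3) - Real.cos (3*π/7) ≤ Real.cos (2*π/3) - Real.cos (4*π/5) := by
  rw [show 4*π/5 = π - π/5 by ring, Real.cos_pi_sub, show 2*π/3 = π - π/3 by ring,
    Real.cos_pi_sub]
  linarith [NA]

private lemma prod_eq (X Y : ℝ) :
    Real.sin X * Real.sin Y = (Real.cos (X - Y) - Real.cos (X + Y)) / 2 := by
  have h := Real.cos_sub_cos (X - Y) (X + Y)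
  rw [show (X - Y + (X + Y)) / 2 = X by ring, show (X - Y - (X + Y)) / 2 = -Y by ring,
    Real.sin_neg] at h
  linarith

private lemma s_eq :
    Real.sin (π/21) * Real.sin (8*π/21) = (Real.cos (π/3) - Real.cos (3*π/7)) / 2 := by
  rw [prod_eq, show π/21 - 8*π/21 = -(π/3) by ring, Real.cos_neg,
    show π/21 + 8*π/21 = 3*π/7 by ring]

private lemma case_core (θ L q0 : ℝ) (h0 : 0 ≤ q0) (hπ : 4*θ - 2*L ≤ π) (hq : q0 ≤ 4*θ - 2*L)
    (hnum : Real.cos (π/3) - Real.cos (3*π/7) ≤ Real.cos (2*L) - Real.cos q0) :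
    Real.sin (π/21) * Real.sin (8*π/21) ≤ Real.sin (2*(θ - L)) * Real.sin (2*θ) := by
  have h1 : Real.cos (4*θ - 2*L) ≤ Real.cos q0 := Real.cos_le_cos_of_nonneg_of_le_pi h0 hπ hq
  have e2 : Real.sin (2*(θ - L)) * Real.sin (2*θ)
      = (Real.cos (2*L) - Real.cos (4*θ - 2*L)) / 2 := by
    rw [prod_eq, show 2*(θ - L) - 2*θ = -(2*L) by ring, Real.cos_neg,
      show 2*(θ - L) + 2*θ = 4*θ - 2*L by ring]
  rw [s_eq, e2]; linarith

private lemma case_core' (θ U q0 : ℝ) (h0 : 0 ≤ 4*θ - 2*U) (hπ : q0 ≤ π) (hq : 4*θ - 2*U ≤ q0)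
    (hnum : Real.cos (π/3) - Real.cos (3*π/7) ≤ Real.cos q0 - Real.cos (2*U)) :
    Real.sin (π/21) * Real.sin (8*π/21) ≤ Real.sin (2*(U - θ)) * Real.sin (2*θ) := by
  have h1 : Real.cos q0 ≤ Real.cos (4*θ - 2*U) := Real.cos_le_cos_of_nonneg_of_le_pi h0 hπ hq
  have e2 : Real.sin (2*(U - θ)) * Real.sin (2*θ)
      = (Real.cos (4*θ - 2*U) - Real.cos (2*U)) / 2 := by
    rw [prod_eq, show 2*(U - θ) - 2*θ = -(4*θ - 2*U) by ring, Real.cos_neg,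
      show 2*(U - θ) + 2*θ = 2*U by ring]
  rw [s_eq, e2]; linarith

private lemma eps_le (θ ε d : ℝ) (hsin : 0 < Real.sin (2*θ)) (hε0 : 0 ≤ ε) (hε4 : ε ≤ π/4)
    (hA : ε ≤ 1/2 * Real.arcsin (Real.sin (π/21) * Real.sin (8*π/21) / Real.sin (2*θ)))
    (hd0 : 0 ≤ d)
    (hkey : Real.sin (π/21) * Real.sin (8*π/21) ≤ Real.sin (2*d) * Real.sin (2*θ)) :
    ε ≤ d := by
  have pi_pos := Real.pi_pos
  have hs0 : 0 ≤ Real.sin (π/21) * Real.sin (8*π/21) := by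
    apply mul_nonneg <;> apply Real.sin_nonneg_of_nonneg_of_le_pi <;> nlinarith
  set s := Real.sin (π/21) * Real.sin (8*π/21) with hs
  have hx0 : 0 ≤ s / Real.sin (2*θ) := div_nonneg hs0 hsin.le
  have h2ε : 2*ε ≤ Real.arcsin (s / Real.sin (2*θ)) := by linarith
  have hsin2ε : Real.sin (2*ε) ≤ s / Real.sin (2*θ) := by
    calc Real.sin (2*ε) ≤ Real.sin (Real.arcsin (s / Real.sin (2*θ))) := by
          apply Real.strictMonoOn_sin.monotoneOn ⟨by linarith, by linarith⟩
            ⟨Real.neg_pi_div_two_le_arcsin _, Real.arcsin_le_pi_div_two _⟩ h2ε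
      _ ≤ s / Real.sin (2*θ) := by
          rcases le_or_gt (s / Real.sin (2*θ)) 1 with h | h
          · rw [Real.sin_arcsin (by linarith) h]
          · exact (Real.sin_le_one _).trans h.le
  have hprod : Real.sin (2*ε) * Real.sin (2*θ) ≤ s := (le_div_iff₀ hsin).1 hsin2ε
  by_contra hcon
  push_neg at hcon
  have hlt : Real.sin (2*d) < Real.sin (2*ε) :=
    Real.strictMonoOn_sin ⟨by linarith, by linarith⟩ ⟨by linarith, by linarith⟩ (by linarith)
  have := mul_lt_mul_of_pos_right hlt hsin
  linarith

set_option maxHeartbeats 1000000 in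
theorem interval_in_single_subdivision (θ εθ : ℝ) (hθ0 : 0 ≤ θ) (hθ : θ ≤ π / 2)
    (hε0 : 0 ≤ εθ)
    (hε : εθ ≤ min (min
        (if Real.sin (2 * θ) = 0 then π / 2
          else (1 / 2) * Real.arcsin (Real.sin (π / 21) * Real.sin (8 * π / 21) / Real.sin (2 * θ)))
        (π / 2 - θ)) θ) :
    ∃ m ∈ ({3, 5, 7} : Set ℕ), ∃ p : ℕ, 1 ≤ p ∧ p ≤ m ∧
      Set.Icc (θ - εθ) (θ + εθ) ⊆
        Set.Icc (((p : ℝ) - 1) * π / (2 * m)) ((p : ℝ) * π / (2 * m)) := by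
  have pi_pos := Real.pi_pos
  have hε1 := hε.trans ((min_le_left _ _).trans (min_le_left _ _))
  have hε2 : εθ ≤ π/2 - θ := hε.trans ((min_le_left _ _).trans (min_le_right _ _))
  have hε3 : εθ ≤ θ := hε.trans (min_le_right _ _)
  rcases le_or_gt θ (π/12) with hA1 | hA1
  · exact ⟨3, by norm_num, 1, le_refl _, by norm_num,
      Set.Icc_subset_Icc (by push_cast; linarith) (by push_cast; linarith)⟩
  rcases le_or_gt (5*π/12) θ with hI1 | hI1
  · exact ⟨3, by norm_num, 3, by norm_num, le_refl _,
      Set.Icc_subset_Icc (by push_cast; linarith) (by push_cast; linarith)⟩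
  have hsin : 0 < Real.sin (2*θ) :=
    Real.sin_pos_of_pos_of_lt_pi (by linarith) (by linarith)
  rw [if_neg (ne_of_gt hsin)] at hε1
  have hε4 : εθ ≤ π/4 := by linarith
  rcases le_or_gt θ (2*π/15) with hB | hB
  · -- m = 3, p = 1
    have hd : εθ ≤ π/6 - θ := eps_le θ εθ _ hsin hε0 hε4 hε1 (by linarith)
      (case_core' θ (π/6) (π/5) (by linarith) (by linarith) (by linarith)
        (by rw [show 2*(π/6) = π/3 by ring]; exact NA))
    exact ⟨3, by norm_num, 1, le_refl _, by norm_num,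
      Set.Icc_subset_Icc (by push_cast; linarith) (by push_cast; linarith)⟩
  rcases le_or_gt θ (6*π/35) with hC | hC
  · -- m = 5, p = 2
    have hdL : εθ ≤ θ - π/10 := eps_le θ εθ _ hsin hε0 hε4 hε1 (by linarith)
      (case_core θ (π/10) (π/3) (by linarith) (by linarith) (by linarith)
        (by rw [show 2*(π/10) = π/5 by ring]; exact NA))
    have hdU : εθ ≤ π/5 - θ := eps_le θ εθ _ hsin hε0 hε4 hε1 (by linarith)
      (case_core' θ (π/5) (2*π/7) (by linarith) (by linarith) (by linarith)
        (by rw [show 2*(π/5) = 2*π/5 by ring]; exact NB))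
    exact ⟨5, by norm_num, 2, by norm_num, by norm_num,
      Set.Icc_subset_Icc (by push_cast; linarith) (by push_cast; linarith)⟩
  rcases le_or_gt θ (4*π/21) with hD | hD
  · -- m = 7, p = 3
    have hdL : εθ ≤ θ - π/7 := eps_le θ εθ _ hsin hε0 hε4 hε1 (by linarith)
      (case_core θ (π/7) (2*π/5) (by linarith) (by linarith) (by linarith)
        (by rw [show 2*(π/7) = 2*π/7 by ring]; exact NB))
    have hdU : εθ ≤ 3*π/14 - θ := eps_le θ εθ _ hsin hε0 hε4 hε1 (by linarith)
      (case_core' θ (3*π/14) (π/3) (by linarith) (by linarith) (by linarith)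
        (by rw [show 2*(3*π/14) = 3*π/7 by ring]))
    exact ⟨7, by norm_num, 3, by norm_num, by norm_num,
      Set.Icc_subset_Icc (by push_cast; linarith) (by push_cast; linarith)⟩
  rcases le_or_gt θ (13*π/42) with hE | hE
  · -- m = 3, p = 2
    have hdL : εθ ≤ θ - π/6 := eps_le θ εθ _ hsin hε0 hε4 hε1 (by linarith)
      (case_core θ (π/6) (3*π/7) (by linarith) (by linarith) (by linarith)
        (by rw [show 2*(π/6) = π/3 by ring]))
    have hdU : εθ ≤ π/3 - θ := eps_le θ εθ _ hsin hε0 hε4 hε1 (by linarith)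
      (case_core' θ (π/3) (4*π/7) (by linarith) (by linarith) (by linarith)
        (by rw [show 2*(π/3) = 2*π/3 by ring]; exact ND))
    exact ⟨3, by norm_num, 2, by norm_num, by norm_num,
      Set.Icc_subset_Icc (by push_cast; linarith) (by push_cast; linarith)⟩
  rcases le_or_gt θ (23*π/70) with hF | hF
  · -- m = 7, p = 5
    have hdL : εθ ≤ θ - 2*π/7 := eps_le θ εθ _ hsin hε0 hε4 hε1 (by linarith)
      (case_core θ (2*π/7) (2*π/3) (by linarith) (by linarith) (by linarith)
        (by rw [show 2*(2*π/7) = 4*π/7 by ring]; exact ND))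
    have hdU : εθ ≤ 5*π/14 - θ := eps_le θ εθ _ hsin hε0 hε4 hε1 (by linarith)
      (case_core' θ (5*π/14) (3*π/5) (by linarith) (by linarith) (by linarith)
        (by rw [show 2*(5*π/14) = 5*π/7 by ring]; exact NB'))
    exact ⟨7, by norm_num, 5, by norm_num, by norm_num,
      Set.Icc_subset_Icc (by push_cast; linarith) (by push_cast; linarith)⟩
  rcases le_or_gt θ (11*π/30) with hG | hG
  · -- m = 5, p = 4
    have hdL : εθ ≤ θ - 3*π/10 := eps_le θ εθ _ hsin hε0 hε4 hε1 (by linarith)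
      (case_core θ (3*π/10) (5*π/7) (by linarith) (by linarith) (by linarith)
        (by rw [show 2*(3*π/10) = 3*π/5 by ring]; exact NB'))
    have hdU : εθ ≤ 2*π/5 - θ := eps_le θ εθ _ hsin hε0 hε4 hε1 (by linarith)
      (case_core' θ (2*π/5) (2*π/3) (by linarith) (by linarith) (by linarith)
        (by rw [show 2*(2*π/5) = 4*π/5 by ring]; exact NA'))
    exact ⟨5, by norm_num, 4, by norm_num, by norm_num,
      Set.Icc_subset_Icc (by push_cast; linarith) (by push_cast; linarith)⟩
  · -- m = 3, p = 3
    have hdL : εθ ≤ θ - π/3 := eps_le θ εθ _ hsin hε0 hε4 hε1 (by linarith)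
      (case_core θ (π/3) (4*π/5) (by linarith) (by linarith) (by linarith)
        (by rw [show 2*(π/3) = 2*π/3 by ring]; exact NA'))
    exact ⟨3, by norm_num, 3, by norm_num, by norm_num,
      Set.Icc_subset_Icc (by push_cast; linarith) (by push_cast; linarith)⟩
end

section
/- Let c = 1/(sin²(π/21)·sin²(8π/21)), K_max > 0, 0 < α_j ≤ 1/2, and let K₁ ≤ K₂ ≤ … ≤ K_t ≤ K_max satisfy K_i ≥ 2·K_{i-1} for i in a prefix of length T₁ and K_i ≥ 3·K_{i-1} thereafter. Then ∑_{i=1}^{t} c·K_i·ln(2q_i·K_max/((q_i - 1)·K_i·α_j)) < c·K_max·(3·ln 4 + (9/4)·ln 3 + (7/2)·ln(1/α_j)), where q_i = 2 for i ≤ T₁ and q_i = 3 for i > T₁. -/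
open Real

private lemma aux_xlog_mono (x y B : ℝ) (hx : 0 < x) (hxy : x ≤ y) (hy1 : y ≤ 1)
    (hB : 1 ≤ B) : x * (B - Real.log x) ≤ y * (B - Real.log y) := by
  have hy : 0 < y := lt_of_lt_of_le hx hxy
  have h1 : Real.log (y / x) ≤ y / x - 1 := Real.log_le_sub_one_of_pos (by positivity)
  have h2 : Real.log (y / x) = Real.log y - Real.log x := Real.log_div hy.ne' hx.ne'
  have h3 : Real.log y ≤ 0 := Real.log_nonpos hy.le hy1
  have h4 : x * (Real.log y - Real.log x) ≤ y - x := by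
    have := mul_le_mul_of_nonneg_left h1 hx.le
    rw [h2] at this
    calc x * (Real.log y - Real.log x) ≤ x * (y / x - 1) := this
      _ = y - x := by field_simp
  nlinarith [mul_nonneg (sub_nonneg.mpr hxy) (by linarith : (0:ℝ) ≤ B - Real.log y - 1)]

private lemma aux_sum_geo (n : ℕ) : ∑ j ∈ Finset.range n, ((1:ℝ) / 2) ^ j ≤ 2 :=
  sum_geometric_two_le n

private lemma aux_sum_jgeo (n : ℕ) :
    ∑ j ∈ Finset.range n, (j : ℝ) * ((1:ℝ) / 2) ^ j ≤ 2 := by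
  have h : HasSum (fun j : ℕ => (j : ℝ) * ((1:ℝ) / 2) ^ j) (((1:ℝ)/2) / (1 - 1/2) ^ 2) :=
    hasSum_coe_mul_geometric_of_norm_lt_one (by norm_num [abs_of_pos] : ‖(1:ℝ)/2‖ < 1)
  have h2 := sum_le_hasSum (Finset.range n)
    (fun i _ => by positivity) h
  calc ∑ j ∈ Finset.range n, (j : ℝ) * ((1:ℝ) / 2) ^ j ≤ ((1:ℝ)/2) / (1 - 1/2) ^ 2 := h2
    _ = 2 := by norm_num

theorem query_complexity_sum_bound (t T₁ : ℕ) (ht : 1 ≤ t) (hT₁ : T₁ ≤ t)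
    (c Kmax αj : ℝ)
    (hc : c = 1 / (Real.sin (π / 21) ^ 2 * Real.sin (8 * π / 21) ^ 2))
    (hKmax : 0 < Kmax) (hα0 : 0 < αj) (hα : αj ≤ 1 / 2)
    (K : ℕ → ℝ) (hpos : ∀ i, 1 ≤ i → i ≤ t → 0 < K i)
    (hmono : ∀ i, 1 ≤ i → i + 1 ≤ t → K i ≤ K (i + 1))
    (hle : ∀ i, 1 ≤ i → i ≤ t → K i ≤ Kmax)
    (hgrow2 : ∀ i, 2 ≤ i → i ≤ T₁ → K i ≥ 2 * K (i - 1))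
    (hgrow3 : ∀ i, T₁ < i → 2 ≤ i → i ≤ t → K i ≥ 3 * K (i - 1))
    (q : ℕ → ℝ) (hq : ∀ i, q i = if i ≤ T₁ then 2 else 3) :
    ∑ i ∈ Finset.Icc 1 t,
        c * K i * Real.log (2 * q i * Kmax / ((q i - 1) * K i * αj)) <
      c * Kmax * (3 * Real.log 4 + (9 / 4) * Real.log 3 + (7 / 2) * Real.log (1 / αj)) := by
  have hπ := Real.pi_pos
  have hs1 : 0 < Real.sin (π / 21) :=
    Real.sin_pos_of_pos_of_lt_pi (by positivity) (by linarith)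
  have hs2 : 0 < Real.sin (8 * π / 21) :=
    Real.sin_pos_of_pos_of_lt_pi (by positivity) (by linarith)
  have hcpos : 0 < c := by rw [hc]; positivity
  set L : ℝ := Real.log (1 / αj) with hLdef
  have hinv2 : (2:ℝ) ≤ 1 / αj := by
    rw [le_div_iff₀ hα0]; linarith
  have hL2 : Real.log 2 ≤ L := Real.log_le_log (by norm_num) hinv2
  have hlog2pos : (0:ℝ) < Real.log 2 := Real.log_pos (by norm_num)
  have hlog3pos : (0:ℝ) < Real.log 3 := Real.log_pos (by norm_num)
  have hlog34 : Real.log 3 ≤ Real.log 4 := Real.log_le_log (by norm_num) (by norm_num)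
  have hlog4 : Real.log 4 = 2 * Real.log 2 := by
    rw [show (4:ℝ) = 2 ^ 2 by norm_num, Real.log_pow]; push_cast; ring
  have hLpos : 0 < L := lt_of_lt_of_le hlog2pos hL2
  -- log 6 ≥ 1
  have hlog6 : (1:ℝ) ≤ Real.log 2 + Real.log 3 := by
    have h6 : Real.log 2 + Real.log 3 = Real.log 6 := by
      rw [← Real.log_mul (by norm_num) (by norm_num)]; norm_num
    rw [h6]
    rw [Real.le_log_iff_exp_le (by norm_num)]
    calc Real.exp 1 ≤ 2.7182818286 := Real.exp_one_lt_d9.le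
      _ ≤ 6 := by norm_num
  -- growth step: each step multiplies by at least 2
  have hstep : ∀ i, 1 ≤ i → i + 1 ≤ t → 2 * K i ≤ K (i + 1) := by
    intro i h1 h2
    by_cases hT : i + 1 ≤ T₁
    · have := hgrow2 (i + 1) (by omega) hT
      simpa using this
    · have h3 := hgrow3 (i + 1) (by omega) (by omega) h2
      have hKi := hpos i h1 (by omega)
      simp only [Nat.add_sub_cancel] at h3
      linarith
  have hdecay : ∀ d i, 1 ≤ i → i + d = t → K i * 2 ^ d ≤ Kmax := by
    intro d
    induction d with
    | zero => intro i h1 h2; simpa using hle i h1 (by omega)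
    | succ d ih =>
      intro i h1 h2
      have h3 : 2 * K i ≤ K (i + 1) := hstep i h1 (by omega)
      have h4 := ih (i + 1) (by omega) (by omega)
      have h5 : (0:ℝ) < 2 ^ d := by positivity
      calc K i * 2 ^ (d + 1) = (2 * K i) * 2 ^ d := by ring
        _ ≤ K (i + 1) * 2 ^ d := by nlinarith
        _ ≤ Kmax := h4
  -- per-term bound
  have hterm : ∀ i ∈ Finset.Icc 1 t,
      c * K i * Real.log (2 * q i * Kmax / ((q i - 1) * K i * αj)) ≤
      c * Kmax * (((1:ℝ)/2) ^ (t - i) *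
        ((Real.log 4 + L) + ((t - i : ℕ) : ℝ) * Real.log 2)) := by
    intro i hi
    rw [Finset.mem_Icc] at hi
    obtain ⟨hi1, hi2⟩ := hi
    have hKi : 0 < K i := hpos i hi1 hi2
    have hqi : q i = 2 ∨ q i = 3 := by
      rw [hq]; split <;> simp
    have hq1 : (0:ℝ) < q i - 1 := by rcases hqi with h | h <;> rw [h] <;> norm_num
    have hq0 : (0:ℝ) < q i := by linarith
    -- rewrite the log
    have harg : 2 * q i * Kmax / ((q i - 1) * K i * αj) =
        (2 * q i / (q i - 1)) * (Kmax / K i) * (1 / αj) := by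
      field_simp
    have hlogsplit : Real.log (2 * q i * Kmax / ((q i - 1) * K i * αj)) =
        Real.log (2 * q i / (q i - 1)) + Real.log (Kmax / K i) + L := by
      rw [harg, Real.log_mul (by positivity) (by positivity),
        Real.log_mul (by positivity) (by positivity)]
    set A : ℝ := Real.log (2 * q i / (q i - 1)) with hAdef
    have hA4 : A ≤ Real.log 4 := by
      rcases hqi with h | h <;> rw [hAdef, h]
      · norm_num
      · have : (2:ℝ) * 3 / (3 - 1) = 3 := by norm_num
        rw [this]; exact hlog34
    have hA3 : Real.log 3 ≤ A := by
      rcases hqi with h | h <;> rw [hAdef, h]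
      · have : (2:ℝ) * 2 / (2 - 1) = 4 := by norm_num
        rw [this]; exact hlog34
      · have : (2:ℝ) * 3 / (3 - 1) = 3 := by norm_num
        rw [this]
    set x : ℝ := K i / Kmax with hxdef
    have hx : 0 < x := by positivity
    have hlogKm : Real.log (Kmax / K i) = - Real.log x := by
      rw [hxdef, ← Real.log_inv]; congr 1; field_simp
    set n : ℕ := t - i with hndef
    set ρ : ℝ := ((1:ℝ)/2) ^ n with hρdef
    have hρpos : 0 < ρ := by positivity
    have hρ1 : ρ ≤ 1 := by
      rw [hρdef]; exact pow_le_one₀ (by norm_num) (by norm_num)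
    have hxρ : x ≤ ρ := by
      have hd := hdecay n i hi1 (by omega)
      rw [hxdef, div_le_iff₀ hKmax, hρdef]
      have h2n : ((1:ℝ)/2) ^ n = (2 ^ n)⁻¹ := by
        rw [one_div, inv_pow]
      rw [h2n]
      have h2npos : (0:ℝ) < 2 ^ n := by positivity
      rw [inv_mul_eq_div, le_div_iff₀ h2npos] at *
      linarith [hd]
    have hlogρ : Real.log ρ = - (n : ℝ) * Real.log 2 := by
      rw [hρdef, Real.log_pow, one_div, Real.log_inv]; push_cast; ring
    set B : ℝ := A + L with hBdef
    have hB1 : 1 ≤ B := by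
      rw [hBdef]; linarith
    have hmain : x * (B - Real.log x) ≤ ρ * (B - Real.log ρ) :=
      aux_xlog_mono x ρ B hx hxρ hρ1 hB1
    have hKix : K i = Kmax * x := by rw [hxdef]; field_simp
    calc c * K i * Real.log (2 * q i * Kmax / ((q i - 1) * K i * αj))
        = c * Kmax * (x * (B - Real.log x)) := by
          rw [hlogsplit, hlogKm, hKix, hBdef]; ring
      _ ≤ c * Kmax * (ρ * (B - Real.log ρ)) := by
          apply mul_le_mul_of_nonneg_left hmain (by positivity)
      _ = c * Kmax * (ρ * ((A + L) + (n : ℝ) * Real.log 2)) := by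
          rw [hlogρ, hBdef]; ring
      _ ≤ c * Kmax * (ρ * ((Real.log 4 + L) + (n : ℝ) * Real.log 2)) := by
          apply mul_le_mul_of_nonneg_left _ (by positivity)
          apply mul_le_mul_of_nonneg_left _ hρpos.le
          linarith
  -- sum the bound
  have hsum := Finset.sum_le_sum hterm
  set D : ℝ := Real.log 4 + L with hDdef
  have hDpos : 0 < D := by rw [hDdef]; nlinarith
  have hre : ∑ i ∈ Finset.Icc 1 t,
      c * Kmax * (((1:ℝ)/2) ^ (t - i) * (D + ((t - i : ℕ) : ℝ) * Real.log 2)) =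
      c * Kmax * ∑ j ∈ Finset.range t, ((1:ℝ)/2) ^ j * (D + (j : ℝ) * Real.log 2) := by
    rw [Finset.mul_sum]
    refine Finset.sum_nbij' (fun i => t - i) (fun j => t - j) ?_ ?_ ?_ ?_ ?_ <;>
      intro a ha <;> simp only [Finset.mem_Icc, Finset.mem_range] at ha ⊢ <;>
        first | omega | rfl
  have hsum2 : ∑ j ∈ Finset.range t, ((1:ℝ)/2) ^ j * (D + (j : ℝ) * Real.log 2) ≤
      2 * D + 2 * Real.log 2 := by
    have heq : ∑ j ∈ Finset.range t, ((1:ℝ)/2) ^ j * (D + (j : ℝ) * Real.log 2) =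
        D * (∑ j ∈ Finset.range t, ((1:ℝ)/2) ^ j) +
        Real.log 2 * (∑ j ∈ Finset.range t, (j : ℝ) * ((1:ℝ)/2) ^ j) := by
      rw [Finset.mul_sum, Finset.mul_sum, ← Finset.sum_add_distrib]
      apply Finset.sum_congr rfl
      intro j _; ring
    rw [heq]
    have h1 := aux_sum_geo t
    have h2 := aux_sum_jgeo t
    nlinarith
  have hfinal : c * Kmax * (2 * D + 2 * Real.log 2) <
      c * Kmax * (3 * Real.log 4 + (9 / 4) * Real.log 3 + (7 / 2) * L) := by
    apply mul_lt_mul_of_pos_left _ (by positivity)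
    rw [hDdef]
    nlinarith
  calc ∑ i ∈ Finset.Icc 1 t,
        c * K i * Real.log (2 * q i * Kmax / ((q i - 1) * K i * αj))
      ≤ ∑ i ∈ Finset.Icc 1 t,
        c * Kmax * (((1:ℝ)/2) ^ (t - i) * (D + ((t - i : ℕ) : ℝ) * Real.log 2)) := hsum
    _ = c * Kmax * ∑ j ∈ Finset.range t, ((1:ℝ)/2) ^ j * (D + (j : ℝ) * Real.log 2) := hre
    _ ≤ c * Kmax * (2 * D + 2 * Real.log 2) := by
        apply mul_le_mul_of_nonneg_left hsum2 (by positivity)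
    _ < c * Kmax * (3 * Real.log 4 + (9 / 4) * Real.log 3 + (7 / 2) * L) := hfinal
end
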